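/- Let m = \sum_{i=0}^{s} 2^{t_i} with t_0 > ... > t_s \ge 0, and split m = m_1 + m_2 where m_1 = \sum_{i=0}^{a} 2^{t_i} and m_2 = \sum_{i=a+1}^{s} 2^{t_i} for some a < s. Define ex(m) = \sum_{i=0}^{s} t_i 2^{t_i} + \sum_{i=0}^{s} 2 i 2^{t_i} (computed with respect to each number's own binary expansion). Then ex(m) = ex(m_1) + ex(m_2) + 2(a+1) m_2. -/

import Mathlib

/-- Closed-form hypercube edge-isoperimetric function: for `m` with binary expansion
`m = 2^{t_0} + ... + 2^{t_s}` with `t_0 > ... > t_s`, this equals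
`∑ t_i 2^{t_i} + ∑ 2 i 2^{t_i}`. -/
def ex : ℕ → ℕ
  | 0 => 0
  | (m+1) =>
      Nat.log2 (m+1) * 2 ^ Nat.log2 (m+1) + 2 * ((m+1) - 2 ^ Nat.log2 (m+1))
        + ex ((m+1) - 2 ^ Nat.log2 (m+1))
decreasing_by
  exact Nat.sub_lt (Nat.succ_pos m) (Nat.two_pow_pos _)

open Finset

lemma ex_eq (m : ℕ) (hm : 0 < m) : ex m =
    Nat.log2 m * 2 ^ Nat.log2 m + 2 * (m - 2 ^ Nat.log2 m) + ex (m - 2 ^ Nat.log2 m) := by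
  obtain ⟨n, rfl⟩ := Nat.exists_eq_add_of_lt hm
  simp only [Nat.zero_add] at *
  rw [ex]

lemma sum_pow_lt {k n : ℕ} (u : Fin k → ℕ) (hu : Function.Injective u) (h : ∀ i, u i < n) :
    ∑ i, 2 ^ (u i) < 2 ^ n := by
  have h1 : ∑ i, 2 ^ (u i) = ∑ j ∈ (univ : Finset (Fin k)).image u, 2 ^ j :=
    (Finset.sum_image (fun a _ b _ hab => hu hab)).symm
  have h2 : (univ : Finset (Fin k)).image u ⊆ Finset.range n := by
    intro j hj; simp only [Finset.mem_image] at hj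
    obtain ⟨i, _, rfl⟩ := hj; exact Finset.mem_range.mpr (h i)
  calc ∑ i, 2 ^ (u i) ≤ ∑ j ∈ Finset.range n, 2 ^ j := by
        rw [h1]; exact Finset.sum_le_sum_of_subset h2
    _ = (2 ^ n - 1) / (2 - 1) := Nat.geomSum_eq le_rfl n
    _ < 2 ^ n := by have := Nat.two_pow_pos n; simp only [show 2-1=1 from rfl, Nat.div_one]; omega

lemma ex_formula : ∀ (k : ℕ) (t : Fin (k+1) → ℕ), StrictAnti t →
    ex (∑ i, 2 ^ (t i)) = ∑ i, t i * 2 ^ (t i) + 2 * ∑ i : Fin (k+1), (i : ℕ) * 2 ^ (t i) := by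
  intro k
  induction k with
  | zero =>
    intro t _
    simp [Fin.sum_univ_one]
    rw [ex_eq _ (Nat.two_pow_pos _)]
    have hl : Nat.log2 (2 ^ (t 0)) = t 0 := by
      rw [Nat.log2_eq_log_two]; exact Nat.log_pow one_lt_two _
    rw [hl, Nat.sub_self]
    have h0 : ex 0 = 0 := by rw [ex]
    omega
  | succ k ih =>
    intro t ht
    have hanti : StrictAnti (fun i : Fin (k+1) => t i.succ) :=
      fun i j h => ht (Fin.succ_lt_succ_iff.mpr h)
    have hrest : (∑ i : Fin (k+1), 2 ^ (t i.succ)) < 2 ^ (t 0) := by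
      refine sum_pow_lt _ hanti.injective (fun i => ?_)
      exact ht (Fin.succ_pos i)
    have hsplit : (∑ i : Fin (k+2), 2 ^ (t i)) = 2 ^ (t 0) + ∑ i : Fin (k+1), 2 ^ (t i.succ) :=
      Fin.sum_univ_succ _
    have hpos : 0 < ∑ i : Fin (k+2), 2 ^ (t i) := by
      have := Nat.two_pow_pos (t 0); omega
    have hlog : Nat.log2 (∑ i : Fin (k+2), 2 ^ (t i)) = t 0 := by
      rw [Nat.log2_eq_log_two]
      refine Nat.log_eq_of_pow_le_of_lt_pow ?_ ?_
      · rw [hsplit]; exact Nat.le_add_right _ _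
      · rw [hsplit, pow_succ]; omega
    have hsub : (∑ i : Fin (k+2), 2 ^ (t i)) - 2 ^ (t 0) = ∑ i : Fin (k+1), 2 ^ (t i.succ) := by
      omega
    rw [ex_eq _ hpos, hlog, hsub, ih _ hanti]
    rw [Fin.sum_univ_succ (fun i : Fin (k+2) => t i * 2 ^ (t i)),
      Fin.sum_univ_succ (fun i : Fin (k+2) => (i : ℕ) * 2 ^ (t i))]
    simp only [Fin.val_zero, Fin.val_succ, Nat.zero_mul, Nat.add_mul, Nat.one_mul,
      Finset.sum_add_distrib]
    ring


/-- Splitting property: if `m = ∑_{i=0}^{s} 2^{t_i}` with strictly decreasing exponents,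
`m₁ = ∑_{i=0}^{a} 2^{t_i}` and `m₂ = ∑_{i=a+1}^{s} 2^{t_i}` for some `a < s`, then
`ex(m) = ex(m₁) + ex(m₂) + 2(a+1) m₂`. -/
theorem ex_split (s a m m₁ m₂ : ℕ) (t : Fin (s+1) → ℕ) (ht : StrictAnti t) (ha : a < s)
    (hm : m = ∑ i, 2 ^ (t i))
    (hm₁ : m₁ = ∑ i ∈ univ.filter (fun i : Fin (s+1) => (i : ℕ) ≤ a), 2 ^ (t i))
    (hm₂ : m₂ = ∑ i ∈ univ.filter (fun i : Fin (s+1) => a < (i : ℕ)), 2 ^ (t i)) :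
    ex m = ex m₁ + ex m₂ + 2 * (a + 1) * m₂ := by
  obtain ⟨b, hb⟩ : ∃ b, s = a + b + 1 := ⟨s - a - 1, by omega⟩
  subst hb
  have h1 : a + 1 ≤ a + b + 1 + 1 := by omega
  set t₁ : Fin (a+1) → ℕ := fun i => t (Fin.castLE h1 i) with ht₁def
  set t₂ : Fin (b+1) → ℕ := fun i => t ⟨a+1+i, by omega⟩ with ht₂def
  have ht₁ : StrictAnti t₁ := fun i j hij => ht (by rw [Fin.lt_def] at hij ⊢; exact hij)
  have ht₂ : StrictAnti t₂ := fun i j hij => ht (Fin.mk_lt_mk.mpr (by rw [Fin.lt_def] at hij; omega))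
  -- embeddings
  have e₂inj : Function.Injective (fun i : Fin (b+1) => (⟨a+1+i, by omega⟩ : Fin (a+b+1+1))) := by
    intro i j hij
    simp only [Fin.ext_iff, Fin.mk.injEq] at hij ⊢
    omega
  set e₁ : Fin (a+1) ↪ Fin (a+b+1+1) := Fin.castLEEmb h1 with he₁
  set e₂ : Fin (b+1) ↪ Fin (a+b+1+1) := ⟨_, e₂inj⟩ with he₂
  have hf₁ : univ.filter (fun i : Fin (a+b+1+1) => (i : ℕ) ≤ a) = univ.map e₁ := by
    ext i
    simp only [mem_filter, mem_univ, true_and, mem_map, he₁, Fin.castLEEmb,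
      Function.Embedding.coeFn_mk, Fin.castLE]
    constructor
    · intro hi; exact ⟨⟨i, by omega⟩, by simp [Fin.ext_iff]⟩
    · rintro ⟨j, rfl⟩; simpa using by omega
  have hf₂ : univ.filter (fun i : Fin (a+b+1+1) => a < (i : ℕ)) = univ.map e₂ := by
    ext i
    simp only [mem_filter, mem_univ, true_and, mem_map, he₂, Function.Embedding.coeFn_mk]
    constructor
    · intro hi; exact ⟨⟨i - (a+1), by omega⟩, by simp [Fin.ext_iff]; omega⟩
    · rintro ⟨j, rfl⟩; simp; omega
  have key₁ : ∀ f : Fin (a+b+1+1) → ℕ,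
      ∑ i ∈ univ.filter (fun i : Fin (a+b+1+1) => (i : ℕ) ≤ a), f i
        = ∑ i : Fin (a+1), f (e₁ i) := by
    intro f; rw [hf₁, Finset.sum_map]
  have key₂ : ∀ f : Fin (a+b+1+1) → ℕ,
      ∑ i ∈ univ.filter (fun i : Fin (a+b+1+1) => a < (i : ℕ)), f i
        = ∑ i : Fin (b+1), f (e₂ i) := by
    intro f; rw [hf₂, Finset.sum_map]
  have hsplit : ∀ f : Fin (a+b+1+1) → ℕ,
      ∑ i, f i = ∑ i : Fin (a+1), f (e₁ i) + ∑ i : Fin (b+1), f (e₂ i) := by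
    intro f
    rw [← key₁, ← key₂, ← Finset.sum_filter_add_sum_filter_not univ
      (fun i : Fin (a+b+1+1) => (i : ℕ) ≤ a) f]
    congr 1
    apply Finset.sum_congr _ (fun _ _ => rfl)
    apply Finset.filter_congr
    intro i _; simp [not_le]
  -- identify m₁ m₂
  have hm₁' : m₁ = ∑ i : Fin (a+1), 2 ^ (t₁ i) := by rw [hm₁, key₁]; rfl
  have hm₂' : m₂ = ∑ i : Fin (b+1), 2 ^ (t₂ i) := by rw [hm₂, key₂]; rfl
  -- e₁/e₂ values
  have he₁v : ∀ i : Fin (a+1), ((e₁ i : Fin (a+b+1+1)) : ℕ) = (i : ℕ) := fun i => rfl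
  have he₂v : ∀ i : Fin (b+1), ((e₂ i : Fin (a+b+1+1)) : ℕ) = a + 1 + (i : ℕ) := fun i => rfl
  have hte₁ : ∀ i, t (e₁ i) = t₁ i := fun i => rfl
  have hte₂ : ∀ i, t (e₂ i) = t₂ i := fun i => rfl
  -- apply formula
  rw [hm, hm₁', hm₂', ex_formula _ t ht, ex_formula _ t₁ ht₁, ex_formula _ t₂ ht₂,
    hsplit (fun i => t i * 2 ^ (t i)), hsplit (fun i => (i : ℕ) * 2 ^ (t i))]
  simp only [hte₁, hte₂, he₁v, he₂v]
  have expand : ∑ i : Fin (b+1), (a + 1 + (i : ℕ)) * 2 ^ (t₂ i)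
      = (a+1) * (∑ i : Fin (b+1), 2 ^ (t₂ i)) + ∑ i : Fin (b+1), (i : ℕ) * 2 ^ (t₂ i) := by
    rw [Finset.mul_sum, ← Finset.sum_add_distrib]
    exact Finset.sum_congr rfl (fun i _ => by ring)
  rw [expand]
  ring
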